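/- Let μ* be an upward continuous outer measure on a set X. Then GES(X, μ*) holds if and only if for every function φ : X → (ℕ → ℕ) there is a subset Y ⊆ X of full outer measure (μ*(Y) = μ*(X)) such that φ[Y] ∈ K_σ. -/

import Mathlib

open MeasureTheory Filter Set
open scoped ENNReal

/-- A set of sequences is bounded in the everywhere-domination order. -/
def PwBounded (B : Set (ℕ → ℕ)) : Prop := ∃ β : ℕ → ℕ, ∀ α ∈ B, ∀ n, α n ≤ β n

/-- The σ-ideal `K_σ` generated by the `≤`-bounded subsets of `ℕ → ℕ`. -/
def Ksigma : Set (Set (ℕ → ℕ)) :=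
  {A | ∃ B : ℕ → Set (ℕ → ℕ), (∀ n, PwBounded (B n)) ∧ A ⊆ ⋃ n, B n}

/-- `μ` is an upward continuous outer measure. -/
def UpCont {X : Type*} (μ : OuterMeasure X) : Prop :=
  ∀ A : ℕ → Set X,
    Tendsto (fun n => μ (⋃ k < n, A k)) atTop (nhds (μ (⋃ n, A n)))

/-- `GES(X, μ*, F)`: for each `M < μ*(X)` there is `A ⊆ X` with `μ*(A) > M` on which
`F` converges uniformly to `0`. -/
def GESF {X : Type*} (μ : OuterMeasure X) (F : ℕ → X → ℝ) : Prop :=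
  ∀ M < μ Set.univ, ∃ A : Set X, M < μ A ∧ TendstoUniformlyOn F 0 atTop A

/-- `GES(X, μ*)`: `GES(X, μ*, F)` for every sequence `F` of real-valued functions on `X`
converging pointwise to `0`. -/
def GES {X : Type*} (μ : OuterMeasure X) : Prop :=
  ∀ F : ℕ → X → ℝ, (∀ x, Tendsto (fun n => F n x) atTop (nhds 0)) → GESF μ F



noncomputable def egF {X : Type*} (φ : X → ℕ → ℕ) (n : ℕ) (x : X) : ℝ :=
  (1/2 : ℝ) ^ ((Finset.range (n+1)).filter (fun j => ∀ i ≤ j, φ x i ≤ n)).card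

lemma egF_nonneg {X : Type*} (φ : X → ℕ → ℕ) (n : ℕ) (x : X) : 0 ≤ egF φ n x := by
  unfold egF; positivity

lemma egF_tendsto {X : Type*} (φ : X → ℕ → ℕ) (x : X) :
    Tendsto (fun n => egF φ n x) atTop (nhds 0) := by
  rw [Metric.tendsto_atTop]
  intro ε hε
  obtain ⟨m, hm⟩ := exists_pow_lt_of_lt_one hε (by norm_num : (1/2:ℝ) < 1)
  refine ⟨m + (Finset.range (m+1)).sup (φ x), fun n hn => ?_⟩
  have hsub : Finset.range m ⊆ (Finset.range (n+1)).filter (fun j => ∀ i ≤ j, φ x i ≤ n) := by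
    intro j hj
    rw [Finset.mem_range] at hj
    refine Finset.mem_filter.2 ⟨Finset.mem_range.2 (by omega), fun i hi => ?_⟩
    calc φ x i ≤ (Finset.range (m+1)).sup (φ x) := Finset.le_sup (Finset.mem_range.2 (by omega))
      _ ≤ n := by omega
  have hcard : m ≤ ((Finset.range (n+1)).filter (fun j => ∀ i ≤ j, φ x i ≤ n)).card := by
    simpa using Finset.card_le_card hsub
  have h1 : egF φ n x ≤ (1/2:ℝ)^m :=
    pow_le_pow_of_le_one (by norm_num) (by norm_num) hcard
  have h0 : (0:ℝ) ≤ egF φ n x := egF_nonneg φ n x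
  rw [Real.dist_eq, sub_zero, abs_of_nonneg h0]
  exact lt_of_le_of_lt h1 hm

lemma egF_bounded {X : Type*} (φ : X → ℕ → ℕ) (A : Set X)
    (h : TendstoUniformlyOn (egF φ) 0 atTop A) : PwBounded (φ '' A) := by
  rw [Metric.tendstoUniformlyOn_iff] at h
  suffices h2 : ∀ m, ∃ N, ∀ x ∈ A, φ x m ≤ N by
    choose β hβ using h2
    exact ⟨β, by rintro α ⟨x, hx, rfl⟩ m; exact hβ m x hx⟩
  intro m
  obtain ⟨n, hn1, hn2⟩ := ((h ((1/2)^(m+2)) (by positivity)).and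
    (eventually_ge_atTop (m+1))).exists
  refine ⟨n, fun x hx => ?_⟩
  have h3 : egF φ n x < (1/2:ℝ)^(m+2) := by
    have := hn1 x hx
    rwa [Pi.zero_apply, Real.dist_eq, zero_sub, abs_neg,
      abs_of_nonneg (egF_nonneg φ n x)] at this
  set S := (Finset.range (n+1)).filter (fun j => ∀ i ≤ j, φ x i ≤ n) with hS
  have hcard : m + 2 < S.card := by
    by_contra hle
    push_neg at hle
    exact absurd h3 (not_lt.2 (pow_le_pow_of_le_one (by norm_num) (by norm_num) hle))
  have hm1 : m + 1 ∈ S := by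
    by_contra hnot
    have hsub : S ⊆ Finset.range (m+1) := by
      intro j hj
      rw [Finset.mem_range]
      by_contra hj2
      push_neg at hj2
      obtain ⟨-, hj3⟩ := Finset.mem_filter.1 hj
      exact hnot (Finset.mem_filter.2
        ⟨Finset.mem_range.2 (by omega), fun i hi => hj3 i (by omega)⟩)
    have := Finset.card_le_card hsub
    rw [Finset.card_range] at this
    omega
  obtain ⟨-, hspec⟩ := Finset.mem_filter.1 hm1
  exact hspec m (by omega)

lemma exists_approx_seq (a : ℝ≥0∞) (ha : a ≠ 0) :
    ∃ s : ℕ → ℝ≥0∞, (∀ j, s j < a) ∧ ∀ c < a, ∃ j, c ≤ s j := by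
  rcases eq_or_ne a ⊤ with rfl | hat
  · refine ⟨fun j => j, fun j => ENNReal.natCast_lt_top j, fun c hc => ?_⟩
    obtain ⟨n, hn⟩ := ENNReal.exists_nat_gt hc.ne
    exact ⟨n, hn.le⟩
  · refine ⟨fun j => a - ((j:ℝ≥0∞)+1)⁻¹,
      fun j => ENNReal.sub_lt_self hat ha (by simp), fun c hc => ?_⟩
    obtain ⟨n, hn⟩ := ENNReal.exists_inv_nat_lt (tsub_pos_of_lt hc).ne'
    refine ⟨n, ENNReal.le_sub_of_add_le_right (by simp) ?_⟩
    have h1 : ((n:ℝ≥0∞)+1)⁻¹ ≤ (n:ℝ≥0∞)⁻¹ := ENNReal.inv_le_inv.2 le_self_add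
    calc c + ((n:ℝ≥0∞)+1)⁻¹ ≤ c + (a - c) := add_le_add le_rfl (h1.trans hn.le)
      _ = a := add_tsub_cancel_of_le hc.le

/-- For an upward continuous outer measure `μ*` on `X`, `GES(X, μ*)`
holds iff every `φ : X → (ℕ → ℕ)` maps some set `Y` of full outer measure into `K_σ`. -/
theorem stmt6 {X : Type*} (μ : OuterMeasure X) (hμ : UpCont μ) :
    GES μ ↔
      ∀ φ : X → ℕ → ℕ, ∃ Y : Set X, μ Y = μ Set.univ ∧ φ '' Y ∈ Ksigma := by
  constructor
  · intro hG φ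
    by_cases h0 : μ Set.univ = 0
    · refine ⟨∅, by simp [h0], ⟨fun _ => ∅, fun n => ⟨fun _ => 0, by simp⟩, by simp⟩⟩
    · obtain ⟨s, hs, hsc⟩ := exists_approx_seq (μ Set.univ) h0
      choose A hA hU using fun j => hG (egF φ) (egF_tendsto φ) (s j) (hs j)
      refine ⟨⋃ j, A j, ?_, ⟨fun j => φ '' A j, fun j => egF_bounded φ (A j) (hU j),
        by rw [Set.image_iUnion]⟩⟩
      refine le_antisymm (μ.mono (Set.subset_univ _)) (le_of_forall_lt fun c hc => ?_)
      obtain ⟨j, hj⟩ := hsc c hc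
      exact hj.trans_lt ((hA j).trans_le (μ.mono (Set.subset_iUnion A j)))
  · intro h F hF M hM
    have hex : ∀ x k, ∃ N : ℕ, ∀ n ≥ N, dist (F n x) 0 < (1/2:ℝ)^k :=
      fun x k => Metric.tendsto_atTop.1 (hF x) _ (by positivity)
    choose φ hφs using hex
    obtain ⟨Y, hY, B, hB, hYB⟩ := h φ
    choose β hβ using hB
    set C : ℕ → Set X := fun k => Y ∩ φ ⁻¹' (B k) with hC
    have hCU : ⋃ k, C k = Y := by
      apply Set.Subset.antisymm
      · exact Set.iUnion_subset fun k => Set.inter_subset_left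
      · intro x hx
        obtain ⟨k, hk⟩ := Set.mem_iUnion.1 (hYB (Set.mem_image_of_mem φ hx))
        exact Set.mem_iUnion.2 ⟨k, hx, hk⟩
    have ht := hμ C
    rw [hCU, hY] at ht
    obtain ⟨n, hn⟩ := (ht.eventually (eventually_gt_nhds hM)).exists
    refine ⟨⋃ k < n, C k, hn, ?_⟩
    rw [Metric.tendstoUniformlyOn_iff]
    intro ε hε
    obtain ⟨K, hK⟩ := exists_pow_lt_of_lt_one hε (by norm_num : (1/2:ℝ) < 1)
    filter_upwards [eventually_ge_atTop ((Finset.range n).sup (fun k => β k K))]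
      with m hm x hx
    simp only [Set.mem_iUnion] at hx
    obtain ⟨k, hkn, hxk⟩ := hx
    have h1 : φ x K ≤ m := by
      calc φ x K ≤ β k K := hβ k (φ x) hxk.2 K
        _ ≤ (Finset.range n).sup (fun k => β k K) := Finset.le_sup (f := fun k => β k K) (Finset.mem_range.2 hkn)
        _ ≤ m := hm
    rw [Pi.zero_apply, dist_comm]
    exact (hφs x K m h1).trans hK
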